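/- Let u : ℝ → ℝ be continuously differentiable with u and u' square-integrable on ℝ and u(x) → 0 as x → ±∞. Then for every x ∈ ℝ: (1/2)∫_ℝ e^{-|x-y|}( u(y)² + u'(y)²/2 ) dy ≥ u(x)²/2. -/

import Mathlib

open MeasureTheory Filter

/-- the lower bound `F(u) ≥ u²/2` of Proposition 4.1 of the paper,
where `F(u) = Λ⁻²(u² + u_x²/2)` is convolution with the Green kernel `e^{-|y|}/2`. -/
theorem stmt_10 (u : ℝ → ℝ) (hu : ContDiff ℝ 1 u)
    (hu2 : Integrable (fun y => (u y) ^ 2))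
    (hux2 : Integrable (fun y => (deriv u y) ^ 2))
    (huTop : Tendsto u atTop (nhds 0)) (huBot : Tendsto u atBot (nhds 0)) :
    ∀ x : ℝ,
      (u x) ^ 2 / 2
        ≤ (1 / 2) * ∫ y : ℝ, Real.exp (-|x - y|) * ((u y) ^ 2 + (deriv u y) ^ 2 / 2) := by
  intro x
  have hud : Differentiable ℝ u := hu.differentiable one_ne_zero
  have hud' : Continuous (deriv u) := hu.continuous_deriv le_rfl
  have hcu : Continuous u := hu.continuous
  -- the dominating function
  set g : ℝ → ℝ := fun y => 2 * u y ^ 2 + deriv u y ^ 2 with hg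
  have hgint : Integrable g := (hu2.const_mul 2).add hux2
  -- the big integrand
  set G : ℝ → ℝ := fun y => Real.exp (-|x - y|) * (2 * u y ^ 2 + deriv u y ^ 2) with hGdef
  have hGcont : Continuous G := by
    apply Continuous.mul
    · exact Real.continuous_exp.comp (continuous_const.sub continuous_id).abs.neg
    · exact (continuous_const.mul (hcu.pow 2)).add (hud'.pow 2)
  have hGle : ∀ y, ‖G y‖ ≤ g y := by
    intro y
    have h1 : Real.exp (-|x - y|) ≤ 1 := Real.exp_le_one_iff.mpr (neg_nonpos.mpr (abs_nonneg _))
    have h2 : 0 ≤ 2 * u y ^ 2 + deriv u y ^ 2 := by positivity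
    rw [Real.norm_eq_abs, abs_mul, abs_of_nonneg (Real.exp_pos _).le, abs_of_nonneg h2]
    calc Real.exp (-|x - y|) * (2 * u y ^ 2 + deriv u y ^ 2)
        ≤ 1 * (2 * u y ^ 2 + deriv u y ^ 2) := mul_le_mul_of_nonneg_right h1 h2
      _ = g y := one_mul _
  have hGint : Integrable G :=
    hgint.mono' hGcont.aestronglyMeasurable (Filter.Eventually.of_forall hGle)
  -- LEFT piece
  have hleft : u x ^ 2 ≤ ∫ y in Set.Iic x, G y := by
    set f : ℝ → ℝ := fun y => Real.exp (y - x) * u y ^ 2 with hfdef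
    set f' : ℝ → ℝ := fun y => Real.exp (y - x) * (u y ^ 2 + 2 * u y * deriv u y) with hf'def
    have hderiv : ∀ y : ℝ, HasDerivAt f (f' y) y := by
      intro y
      have he : HasDerivAt (fun y => Real.exp (y - x)) (Real.exp (y - x)) y := by
        simpa using ((hasDerivAt_id y).sub_const x).exp
      have hp : HasDerivAt (fun y => u y ^ 2) (2 * u y * deriv u y) y := by
        simpa [mul_comm] using ((hud y).hasDerivAt.fun_pow 2)
      have h := he.fun_mul hp
      refine h.congr_deriv ?_
      simp only [hf'def]
      ring
    have hf'cont : Continuous f' := by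
      apply Continuous.mul
      · exact Real.continuous_exp.comp (continuous_id.sub continuous_const)
      · exact (hcu.pow 2).add ((continuous_const.mul hcu).mul hud')
    have hf'le : ∀ y ∈ Set.Iic x, ‖f' y‖ ≤ g y := by
      intro y hy
      have h1 : Real.exp (y - x) ≤ 1 := Real.exp_le_one_iff.mpr (by simpa using hy)
      have h2 : |u y ^ 2 + 2 * u y * deriv u y| ≤ g y := by
        rw [abs_le]
        simp only [hg]
        constructor <;> nlinarith [sq_nonneg (u y - deriv u y), sq_nonneg (u y + deriv u y),
          sq_nonneg (u y)]
      rw [Real.norm_eq_abs, abs_mul, abs_of_nonneg (Real.exp_pos _).le]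
      calc Real.exp (y - x) * |u y ^ 2 + 2 * u y * deriv u y|
          ≤ 1 * |u y ^ 2 + 2 * u y * deriv u y| :=
            mul_le_mul_of_nonneg_right h1 (abs_nonneg _)
        _ ≤ g y := by rw [one_mul]; exact h2
    have hf'int : IntegrableOn f' (Set.Iic x) :=
      hgint.integrableOn.mono' hf'cont.aestronglyMeasurable.restrict
        ((ae_restrict_iff' measurableSet_Iic).mpr (Filter.Eventually.of_forall hf'le))
    have htend : Tendsto f atBot (nhds 0) := by
      have he : Tendsto (fun y => Real.exp (y - x)) atBot (nhds 0) :=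
        Real.tendsto_exp_atBot.comp (tendsto_atBot_add_const_right _ _ tendsto_id)
      have hu2' : Tendsto (fun y => u y ^ 2) atBot (nhds 0) := by
        simpa using (huBot.pow 2)
      simpa using he.mul hu2'
    have key : ∫ y in Set.Iic x, f' y = f x - 0 :=
      integral_Iic_of_hasDerivAt_of_tendsto (hderiv x).continuousAt.continuousWithinAt
        (fun y _ => hderiv y) hf'int htend
    have hmono : ∫ y in Set.Iic x, f' y ≤ ∫ y in Set.Iic x, G y := by
      apply setIntegral_mono_on hf'int hGint.integrableOn measurableSet_Iic
      intro y hy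
      have hyx : y ≤ x := hy
      have hexp : Real.exp (y - x) = Real.exp (-|x - y|) := by
        rw [abs_of_nonneg (by linarith : (0:ℝ) ≤ x - y)]; ring_nf
      have h2 : u y ^ 2 + 2 * u y * deriv u y ≤ 2 * u y ^ 2 + deriv u y ^ 2 := by
        nlinarith [sq_nonneg (u y - deriv u y)]
      calc f' y = Real.exp (y - x) * (u y ^ 2 + 2 * u y * deriv u y) := rfl
        _ ≤ Real.exp (y - x) * (2 * u y ^ 2 + deriv u y ^ 2) :=
            mul_le_mul_of_nonneg_left h2 (Real.exp_pos _).le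
        _ = G y := by rw [hexp]
    have hfx : f x = u x ^ 2 := by simp [hfdef]
    calc u x ^ 2 = f x - 0 := by rw [hfx, sub_zero]
      _ = ∫ y in Set.Iic x, f' y := key.symm
      _ ≤ ∫ y in Set.Iic x, G y := hmono
  -- RIGHT piece
  have hright : u x ^ 2 ≤ ∫ y in Set.Ioi x, G y := by
    set f : ℝ → ℝ := fun y => Real.exp (x - y) * u y ^ 2 with hfdef
    set f' : ℝ → ℝ := fun y => Real.exp (x - y) * (2 * u y * deriv u y - u y ^ 2) with hf'def
    have hderiv : ∀ y : ℝ, HasDerivAt f (f' y) y := by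
      intro y
      have he : HasDerivAt (fun y => Real.exp (x - y)) (-Real.exp (x - y)) y := by
        simpa using ((hasDerivAt_id y).const_sub x).exp
      have hp : HasDerivAt (fun y => u y ^ 2) (2 * u y * deriv u y) y := by
        simpa [mul_comm] using ((hud y).hasDerivAt.fun_pow 2)
      have h := he.fun_mul hp
      refine h.congr_deriv ?_
      simp only [hf'def]
      ring
    have hf'cont : Continuous f' := by
      apply Continuous.mul
      · exact Real.continuous_exp.comp (continuous_const.sub continuous_id)
      · exact (((continuous_const.mul hcu).mul hud')).sub (hcu.pow 2)
    have hf'le : ∀ y ∈ Set.Ioi x, ‖f' y‖ ≤ g y := by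
      intro y hy
      have hyx : x ≤ y := le_of_lt hy
      have h1 : Real.exp (x - y) ≤ 1 := Real.exp_le_one_iff.mpr (by linarith)
      have h2 : |2 * u y * deriv u y - u y ^ 2| ≤ g y := by
        rw [abs_le]
        simp only [hg]
        constructor <;> nlinarith [sq_nonneg (u y - deriv u y), sq_nonneg (u y + deriv u y),
          sq_nonneg (u y)]
      rw [Real.norm_eq_abs, abs_mul, abs_of_nonneg (Real.exp_pos _).le]
      calc Real.exp (x - y) * |2 * u y * deriv u y - u y ^ 2|
          ≤ 1 * |2 * u y * deriv u y - u y ^ 2| :=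
            mul_le_mul_of_nonneg_right h1 (abs_nonneg _)
        _ ≤ g y := by rw [one_mul]; exact h2
    have hf'int : IntegrableOn f' (Set.Ioi x) :=
      hgint.integrableOn.mono' hf'cont.aestronglyMeasurable.restrict
        ((ae_restrict_iff' measurableSet_Ioi).mpr (Filter.Eventually.of_forall hf'le))
    have htend : Tendsto f atTop (nhds 0) := by
      have he : Tendsto (fun y => Real.exp (x - y)) atTop (nhds 0) :=
        Real.tendsto_exp_atBot.comp (by
          show Tendsto (fun y => x - y) atTop atBot; simpa only [sub_eq_add_neg] using (tendsto_atBot_add_const_left _ x tendsto_neg_atTop_atBot))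
      have hu2' : Tendsto (fun y => u y ^ 2) atTop (nhds 0) := by
        simpa using (huTop.pow 2)
      simpa using he.mul hu2'
    have key : ∫ y in Set.Ioi x, f' y = 0 - f x :=
      integral_Ioi_of_hasDerivAt_of_tendsto (hderiv x).continuousAt.continuousWithinAt
        (fun y _ => hderiv y) hf'int htend
    have hmono : ∫ y in Set.Ioi x, (-f' y) ≤ ∫ y in Set.Ioi x, G y := by
      apply setIntegral_mono_on hf'int.neg hGint.integrableOn measurableSet_Ioi
      intro y hy
      have hyx : x ≤ y := le_of_lt hy
      have hexp : Real.exp (x - y) = Real.exp (-|x - y|) := by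
        rw [abs_of_nonpos (by linarith : x - y ≤ 0)]; ring_nf
      have h2 : u y ^ 2 - 2 * u y * deriv u y ≤ 2 * u y ^ 2 + deriv u y ^ 2 := by
        nlinarith [sq_nonneg (u y + deriv u y)]
      calc -f' y = Real.exp (x - y) * (u y ^ 2 - 2 * u y * deriv u y) := by
            simp only [hf'def]; ring
        _ ≤ Real.exp (x - y) * (2 * u y ^ 2 + deriv u y ^ 2) :=
            mul_le_mul_of_nonneg_left h2 (Real.exp_pos _).le
        _ = G y := by rw [hexp]
    have hfx : f x = u x ^ 2 := by simp [hfdef]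
    have hneg : ∫ y in Set.Ioi x, (-f' y) = u x ^ 2 := by
      rw [integral_neg, key, hfx]; ring
    calc u x ^ 2 = ∫ y in Set.Ioi x, (-f' y) := hneg.symm
      _ ≤ ∫ y in Set.Ioi x, G y := hmono
  -- combine
  have hsplit : (∫ y in Set.Iic x, G y) + ∫ y in Set.Ioi x, G y = ∫ y, G y :=
    intervalIntegral.integral_Iic_add_Ioi hGint.integrableOn hGint.integrableOn
  have htotal : 2 * u x ^ 2 ≤ ∫ y, G y := by
    rw [← hsplit]; linarith
  have hrew : (∫ y : ℝ, Real.exp (-|x - y|) * ((u y) ^ 2 + (deriv u y) ^ 2 / 2))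
      = (1 / 2) * ∫ y, G y := by
    rw [← integral_const_mul]
    congr 1
    funext y
    simp only [hGdef]
    ring
  rw [hrew]
  linarith
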